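/- arXiv:2509.11745 — 2 statements merged into one kernel-verified Lean document; each statement's English description precedes it below -/
import Mathlib

section
/- Let s ∈ ℝ^d with nonzero coordinates sorted so that |s_{π(1)}| ≤ ... ≤ |s_{π(d)}|, and let k ≤ d. Then the ℓ²-distance from s to the closed set F_k = {x ∈ ℝ^d : x_i · s_i ≤ 0 for at least k indices i} equals sqrt(Σ_{j=1}^{k} s_{π(j)}²). -/
open Finset

lemma aux_le_apply {k d : ℕ} (e : Fin k → Fin d) (he : StrictMono e) :
    ∀ i : Fin k, (i : ℕ) ≤ (e i : ℕ) := by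
  intro i
  obtain ⟨n, hn⟩ := i
  induction n with
  | zero => exact Nat.zero_le _
  | succ m ih =>
      have hm : m < k := Nat.lt_of_succ_lt hn
      have h1 : (e ⟨m, hm⟩ : ℕ) < (e ⟨m + 1, hn⟩ : ℕ) := he (by simp [Fin.lt_def])
      have := ih hm
      simpa using Nat.lt_of_le_of_lt this h1

lemma aux_sum_smallest {k d : ℕ} (hk : k ≤ d) (f : Fin d → ℝ) (hf : Monotone f)
    (A : Finset (Fin d)) (hA : A.card = k) :
    ∑ j ∈ Finset.univ.filter (fun j : Fin d => (j : ℕ) < k), f j ≤ ∑ j ∈ A, f j := by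
  set e := A.orderEmbOfFin hA with he
  have hAeq : A = Finset.univ.map ⟨e, e.injective⟩ := by
    ext x
    simp only [Finset.mem_map, Finset.mem_univ, true_and, Function.Embedding.coeFn_mk]
    constructor
    · intro hx
      have : x ∈ Set.range e := by rw [Finset.range_orderEmbOfFin]; exact hx
      exact this
    · rintro ⟨i, rfl⟩; exact A.orderEmbOfFin_mem hA i
  have hfil : Finset.univ.filter (fun j : Fin d => (j : ℕ) < k)
      = Finset.univ.map ⟨Fin.castLE hk, Fin.castLE_injective hk⟩ := by
    ext x
    simp only [Finset.mem_filter, Finset.mem_univ, true_and, Finset.mem_map,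
      Function.Embedding.coeFn_mk]
    constructor
    · intro hx; exact ⟨⟨x, hx⟩, rfl⟩
    · rintro ⟨i, rfl⟩; exact i.2
  rw [hAeq, hfil, Finset.sum_map, Finset.sum_map]
  apply Finset.sum_le_sum
  intro i _
  exact hf (by simpa [Fin.le_def] using aux_le_apply e e.strictMono i)

lemma aux_filter_card {k d : ℕ} (hk : k ≤ d) :
    (Finset.univ.filter (fun j : Fin d => (j : ℕ) < k)).card = k := by
  have hfil : Finset.univ.filter (fun j : Fin d => (j : ℕ) < k)
      = Finset.univ.map ⟨Fin.castLE hk, Fin.castLE_injective hk⟩ := by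
    ext x
    simp only [Finset.mem_filter, Finset.mem_univ, true_and, Finset.mem_map,
      Function.Embedding.coeFn_mk]
    constructor
    · intro hx; exact ⟨⟨x, hx⟩, rfl⟩
    · rintro ⟨i, rfl⟩; exact i.2
  rw [hfil]; simp

/-- The ℓ²-distance from `s` (all coordinates nonzero) to the set of points whose sign pattern
weakly disagrees with that of `s` in at least `k` coordinates equals the square root of the sum
of the `k` smallest squared coordinates of `s`. -/
theorem stmt_16 (d k : ℕ) (hk : k ≤ d) (s : Fin d → ℝ) (hs : ∀ i, s i ≠ 0)
    (π : Equiv.Perm (Fin d)) (hπ : Monotone fun j => |s (π j)|) :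
    sInf {r : ℝ | ∃ x : Fin d → ℝ,
        k ≤ (Finset.univ.filter fun i => x i * s i ≤ 0).card ∧
        r = Real.sqrt (∑ i, (x i - s i) ^ 2)}
      = Real.sqrt (∑ j ∈ Finset.univ.filter (fun j : Fin d => (j : ℕ) < k), s (π j) ^ 2) := by
  set R := Real.sqrt (∑ j ∈ Finset.univ.filter (fun j : Fin d => (j : ℕ) < k), s (π j) ^ 2)
    with hR
  -- the minimizer
  set x₀ : Fin d → ℝ := fun i => if ((π.symm i : Fin d) : ℕ) < k then 0 else s i with hx₀
  have hmem : R ∈ {r : ℝ | ∃ x : Fin d → ℝ,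
        k ≤ (Finset.univ.filter fun i => x i * s i ≤ 0).card ∧
        r = Real.sqrt (∑ i, (x i - s i) ^ 2)} := by
    refine ⟨x₀, ?_, ?_⟩
    · have hfeq : (Finset.univ.filter fun i => x₀ i * s i ≤ 0)
          = Finset.univ.filter (fun i : Fin d => ((π.symm i : Fin d) : ℕ) < k) := by
        ext i
        simp only [Finset.mem_filter, Finset.mem_univ, true_and, hx₀]
        by_cases h : ((π.symm i : Fin d) : ℕ) < k
        · simp [h]
        · simp only [h, if_false, iff_false]
          push_neg
          exact mul_self_pos.mpr (hs i)
      rw [hfeq]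
      have hcard : (Finset.univ.filter (fun i : Fin d => ((π.symm i : Fin d) : ℕ) < k)).card
          = (Finset.univ.filter (fun j : Fin d => (j : ℕ) < k)).card := by
        apply Finset.card_bij (fun j _ => π.symm j)
        · intro a ha
          simp only [Finset.mem_filter, Finset.mem_univ, true_and] at ha ⊢
          exact ha
        · intro a _ b _ hab; exact π.symm.injective hab
        · intro b hb
          simp only [Finset.mem_filter, Finset.mem_univ, true_and] at hb ⊢
          exact ⟨π b, by simpa using hb, by simp⟩
      rw [hcard, aux_filter_card hk]
    · congr 1
      have : ∀ i, (x₀ i - s i) ^ 2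
          = if ((π.symm i : Fin d) : ℕ) < k then s i ^ 2 else 0 := by
        intro i
        by_cases h : ((π.symm i : Fin d) : ℕ) < k <;> simp [hx₀, h] <;> ring
      rw [Finset.sum_congr rfl (fun i _ => this i)]
      rw [← Equiv.sum_comp π (fun i => if ((π.symm i : Fin d) : ℕ) < k then s i ^ 2 else 0)]
      simp only [Equiv.symm_apply_apply]
      rw [hR, Finset.sum_filter]
  have hbdd : BddBelow {r : ℝ | ∃ x : Fin d → ℝ,
        k ≤ (Finset.univ.filter fun i => x i * s i ≤ 0).card ∧
        r = Real.sqrt (∑ i, (x i - s i) ^ 2)} := by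
    refine ⟨0, ?_⟩
    rintro r ⟨x, -, rfl⟩
    exact Real.sqrt_nonneg _
  refine le_antisymm (csInf_le hbdd hmem) (le_csInf ⟨R, hmem⟩ ?_)
  rintro r ⟨x, hcard, rfl⟩
  apply Real.sqrt_le_sqrt
  obtain ⟨T', hT'sub, hT'card⟩ :=
    Finset.exists_subset_card_eq (s := Finset.univ.filter fun i => x i * s i ≤ 0) hcard
  have hAcard : (T'.image π.symm).card = k := by
    rw [Finset.card_image_of_injective _ π.symm.injective, hT'card]
  have hmono : Monotone fun j : Fin d => s (π j) ^ 2 := by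
    intro a b hab
    have h1 : |s (π a)| ≤ |s (π b)| := hπ hab
    simpa only [sq_abs] using pow_le_pow_left₀ (abs_nonneg _) h1 2
  calc ∑ j ∈ Finset.univ.filter (fun j : Fin d => (j : ℕ) < k), s (π j) ^ 2
      ≤ ∑ j ∈ T'.image π.symm, s (π j) ^ 2 :=
        aux_sum_smallest hk _ hmono _ hAcard
    _ = ∑ i ∈ T', s i ^ 2 := by
        rw [Finset.sum_image (fun a _ b _ h => π.symm.injective h)]
        simp
    _ ≤ ∑ i ∈ T', (x i - s i) ^ 2 := by
        apply Finset.sum_le_sum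
        intro i hi
        have : x i * s i ≤ 0 := by
          have := hT'sub hi
          simp only [Finset.mem_filter] at this
          exact this.2
        nlinarith
    _ ≤ ∑ i, (x i - s i) ^ 2 :=
        Finset.sum_le_sum_of_subset_of_nonneg (Finset.subset_univ _)
          (fun i _ _ => sq_nonneg _)
end

section
/- Let d ≥ 1, let s ∈ ℝ^d have i.i.d. N(0,1) coordinates, and let M_k denote the sum of the k smallest among s₁²,...,s_d². Then E[M_k] ≤ k · E[s_{(k)}²] where s_{(k)}² is the k-th smallest squared coordinate, and in particular E[M_k] ≤ 4 k (k/d)² · c for some universal constant c when k ≤ d/2; hence the expected squared distortion of flipping the k smallest-magnitude coordinates, 4·E[M_k], is O(k³/d²). -/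
open MeasureTheory ProbabilityTheory Finset

/-- The sum of the `k` smallest among `x 1 ^ 2, …, x d ^ 2`. -/
noncomputable def sumKSmallestSq (d k : ℕ) (x : Fin d → ℝ) : ℝ :=
  sInf {r : ℝ | ∃ S : Finset (Fin d), S.card = k ∧ r = ∑ i ∈ S, x i ^ 2}

/-- The `k`-th smallest among `x 1 ^ 2, …, x d ^ 2`. -/
noncomputable def kthSmallestSq (d k : ℕ) (x : Fin d → ℝ) : ℝ :=
  sInf {r : ℝ | k ≤ (Finset.univ.filter fun i => x i ^ 2 ≤ r).card}

namespace Stmt19Aux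

theorem meas_inf' {ι α : Type*} [MeasurableSpace α] (s : Finset ι) (h : s.Nonempty)
    (f : ι → (α → ℝ)) (hf : ∀ i, Measurable (f i)) :
    Measurable (fun x => s.inf' h (fun i => f i x)) := by
  induction h using Finset.Nonempty.cons_induction with
  | singleton a =>
      have : (fun x => ({a} : Finset ι).inf' (Finset.singleton_nonempty a) fun i => f i x) = f a :=
        funext fun x => Finset.inf'_singleton _
      exact this ▸ hf a
  | cons a s ha hs ih =>
      have : (fun x => (Finset.cons a s ha).inf' (Finset.cons_nonempty ha) fun i => f i x)
          = fun x => (f a x) ⊓ (s.inf' hs fun i => f i x) := funext fun x => Finset.inf'_cons hs _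
      exact this ▸ (hf a).inf ih

theorem meas_sup' {ι α : Type*} [MeasurableSpace α] (s : Finset ι) (h : s.Nonempty)
    (f : ι → (α → ℝ)) (hf : ∀ i, Measurable (f i)) :
    Measurable (fun x => s.sup' h (fun i => f i x)) := by
  induction h using Finset.Nonempty.cons_induction with
  | singleton a =>
      have : (fun x => ({a} : Finset ι).sup' (Finset.singleton_nonempty a) fun i => f i x) = f a :=
        funext fun x => Finset.sup'_singleton _
      exact this ▸ hf a
  | cons a s ha hs ih =>
      have : (fun x => (Finset.cons a s ha).sup' (Finset.cons_nonempty ha) fun i => f i x)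
          = fun x => (f a x) ⊔ (s.sup' hs fun i => f i x) := funext fun x => Finset.sup'_cons hs _
      exact this ▸ (hf a).sup ih
section Aux
variable {d k : ℕ}

lemma pcne (hkd : k ≤ d) : (Finset.powersetCard k (univ : Finset (Fin d))).Nonempty := by
  rw [Finset.powersetCard_nonempty]
  simpa using hkd

lemma sumK_eq (hkd : k ≤ d) (x : Fin d → ℝ) :
    sumKSmallestSq d k x
      = (Finset.powersetCard k (univ : Finset (Fin d))).inf' (pcne hkd)
          (fun S => ∑ i ∈ S, x i ^ 2) := by
  have hbdd : BddBelow {r : ℝ | ∃ S : Finset (Fin d), S.card = k ∧ r = ∑ i ∈ S, x i ^ 2} := by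
    refine ⟨0, fun r hr => ?_⟩
    obtain ⟨S, -, rfl⟩ := hr
    exact Finset.sum_nonneg fun i _ => sq_nonneg _
  obtain ⟨S₀, hS₀mem, hS₀⟩ := Finset.exists_mem_eq_inf' (pcne hkd) (fun S => ∑ i ∈ S, x i ^ 2)
  refine le_antisymm (csInf_le hbdd ?_) (le_csInf ?_ ?_)
  · exact ⟨S₀, (Finset.mem_powersetCard.mp hS₀mem).2, hS₀⟩
  · exact ⟨_, S₀, (Finset.mem_powersetCard.mp hS₀mem).2, hS₀⟩
  · rintro r ⟨S, hS, rfl⟩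
    exact Finset.inf'_le _ (Finset.mem_powersetCard.mpr ⟨Finset.subset_univ _, hS⟩)

lemma sumK_nonneg (hkd : k ≤ d) (x : Fin d → ℝ) : 0 ≤ sumKSmallestSq d k x := by
  rw [sumK_eq hkd]
  exact Finset.le_inf'_iff _ _ |>.mpr fun S _ => Finset.sum_nonneg fun i _ => sq_nonneg _

lemma sumK_le_subset (hkd : k ≤ d) (x : Fin d → ℝ) {S : Finset (Fin d)} (hS : S.card = k) :
    sumKSmallestSq d k x ≤ ∑ i ∈ S, x i ^ 2 := by
  rw [sumK_eq hkd]
  exact Finset.inf'_le _ (Finset.mem_powersetCard.mpr ⟨Finset.subset_univ _, hS⟩)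

lemma sumK_le_total (hkd : k ≤ d) (x : Fin d → ℝ) :
    sumKSmallestSq d k x ≤ ∑ i, x i ^ 2 := by
  obtain ⟨S₀, hS₀mem⟩ := pcne (d := d) (k := k) hkd
  refine (sumK_le_subset hkd x (Finset.mem_powersetCard.mp hS₀mem).2).trans ?_
  exact Finset.sum_le_sum_of_subset_of_nonneg (Finset.subset_univ _) fun i _ _ => sq_nonneg _

/-- max over a (card k) set, with junk value for empty set -/
noncomputable def gmax (x : Fin d → ℝ) (S : Finset (Fin d)) : ℝ :=
  if h : S.Nonempty then S.sup' h (fun i => x i ^ 2) else 0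

lemma kth_eq (hk : 1 ≤ k) (hkd : k ≤ d) (x : Fin d → ℝ) :
    kthSmallestSq d k x
      = (Finset.powersetCard k (univ : Finset (Fin d))).inf' (pcne hkd) (gmax x) := by
  set I := (Finset.powersetCard k (univ : Finset (Fin d))).inf' (pcne hkd) (gmax x) with hI
  obtain ⟨S₁, hS₁mem, hS₁⟩ := Finset.exists_mem_eq_inf' (pcne hkd) (gmax x)
  obtain ⟨hS₁sub, hS₁card⟩ := Finset.mem_powersetCard.mp hS₁mem
  have hS₁ne : S₁.Nonempty := Finset.card_pos.mp (hS₁card ▸ hk)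
  have hgmax : gmax x S₁ = S₁.sup' hS₁ne (fun i => x i ^ 2) := dif_pos hS₁ne
  have hImem : k ≤ (Finset.univ.filter fun i => x i ^ 2 ≤ I).card := by
    calc k = S₁.card := hS₁card.symm
    _ ≤ (Finset.univ.filter fun i => x i ^ 2 ≤ I).card := by
        apply Finset.card_le_card
        intro i hi
        simp only [Finset.mem_filter, Finset.mem_univ, true_and]
        rw [hI, hS₁, hgmax]
        exact Finset.le_sup' (fun i => x i ^ 2) hi
  refine le_antisymm (csInf_le ?_ hImem) (le_csInf ⟨I, hImem⟩ ?_)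
  · refine ⟨0, fun r hr => ?_⟩
    have hr' : k ≤ (Finset.univ.filter fun i => x i ^ 2 ≤ r).card := hr
    have : (Finset.univ.filter fun i => x i ^ 2 ≤ r).Nonempty := by
      rw [← Finset.card_pos]; omega
    obtain ⟨i, hi⟩ := this
    have := (Finset.mem_filter.mp hi).2
    nlinarith [sq_nonneg (x i)]
  · intro r hr
    simp only [Set.mem_setOf_eq] at hr
    obtain ⟨T, hTsub, hTcard⟩ := Finset.exists_subset_card_eq hr
    have hTne : T.Nonempty := Finset.card_pos.mp (hTcard ▸ hk)
    have : I ≤ gmax x T :=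
      Finset.inf'_le _ (Finset.mem_powersetCard.mpr ⟨Finset.subset_univ _, hTcard⟩)
    refine this.trans ?_
    rw [gmax, dif_pos hTne]
    refine Finset.sup'_le _ _ fun i hi => ?_
    exact (Finset.mem_filter.mp (hTsub hi)).2

lemma kth_card_le (hk : 1 ≤ k) (hkd : k ≤ d) (x : Fin d → ℝ) :
    k ≤ (Finset.univ.filter fun i => x i ^ 2 ≤ kthSmallestSq d k x).card := by
  rw [kth_eq hk hkd]
  obtain ⟨S₁, hS₁mem, hS₁⟩ := Finset.exists_mem_eq_inf' (pcne hkd) (gmax x)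
  obtain ⟨hS₁sub, hS₁card⟩ := Finset.mem_powersetCard.mp hS₁mem
  have hS₁ne : S₁.Nonempty := Finset.card_pos.mp (hS₁card ▸ hk)
  calc k = S₁.card := hS₁card.symm
  _ ≤ _ := by
      apply Finset.card_le_card
      intro i hi
      simp only [Finset.mem_filter, Finset.mem_univ, true_and]
      rw [hS₁, show gmax x S₁ = S₁.sup' hS₁ne (fun i => x i ^ 2) from dif_pos hS₁ne]
      exact Finset.le_sup' (fun i => x i ^ 2) hi

lemma kth_exists_eq (hk : 1 ≤ k) (hkd : k ≤ d) (x : Fin d → ℝ) :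
    ∃ j : Fin d, kthSmallestSq d k x = x j ^ 2 := by
  rw [kth_eq hk hkd]
  obtain ⟨S₁, hS₁mem, hS₁⟩ := Finset.exists_mem_eq_inf' (pcne hkd) (gmax x)
  obtain ⟨-, hS₁card⟩ := Finset.mem_powersetCard.mp hS₁mem
  have hS₁ne : S₁.Nonempty := Finset.card_pos.mp (hS₁card ▸ hk)
  obtain ⟨j, -, hj⟩ := Finset.exists_mem_eq_sup' hS₁ne (fun i => x i ^ 2)
  exact ⟨j, by rw [hS₁, show gmax x S₁ = S₁.sup' hS₁ne (fun i => x i ^ 2) from dif_pos hS₁ne, hj]⟩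

lemma kth_nonneg (hk : 1 ≤ k) (hkd : k ≤ d) (x : Fin d → ℝ) : 0 ≤ kthSmallestSq d k x := by
  obtain ⟨j, hj⟩ := kth_exists_eq hk hkd x
  rw [hj]; exact sq_nonneg _

lemma kth_le_total (hk : 1 ≤ k) (hkd : k ≤ d) (x : Fin d → ℝ) :
    kthSmallestSq d k x ≤ ∑ i, x i ^ 2 := by
  obtain ⟨j, hj⟩ := kth_exists_eq hk hkd x
  rw [hj]
  exact Finset.single_le_sum (fun i _ => sq_nonneg (x i)) (Finset.mem_univ j)

lemma sumK_le_k_mul_kth (hk : 1 ≤ k) (hkd : k ≤ d) (x : Fin d → ℝ) :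
    sumKSmallestSq d k x ≤ k * kthSmallestSq d k x := by
  obtain ⟨T, hTsub, hTcard⟩ := Finset.exists_subset_card_eq (kth_card_le hk hkd x)
  refine (sumK_le_subset hkd x hTcard).trans ?_
  calc ∑ i ∈ T, x i ^ 2 ≤ ∑ i ∈ T, kthSmallestSq d k x :=
        Finset.sum_le_sum fun i hi => (Finset.mem_filter.mp (hTsub hi)).2
  _ = k * kthSmallestSq d k x := by rw [Finset.sum_const, hTcard, nsmul_eq_mul]

end Aux
section MT
variable {d k : ℕ}

lemma map_eval (i : Fin d) :
    (Measure.pi fun _ : Fin d => gaussianReal 0 1).map (Function.eval i) = gaussianReal 0 1 := by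
  ext A hA
  rw [Measure.map_apply (measurable_pi_apply i) hA]
  have : Function.eval i ⁻¹' A
      = Set.pi Set.univ (Function.update (fun _ : Fin d => (Set.univ : Set ℝ)) i A) :=
    Set.eval_preimage
  rw [this, Measure.pi_pi]
  rw [Finset.prod_eq_single i]
  · simp
  · intro j _ hj
    simp [Function.update_of_ne hj]
  · simp

lemma integrable_sq_gauss : Integrable (fun s : ℝ => s ^ 2) (gaussianReal 0 1) := by
  rw [gaussianReal_of_var_ne_zero 0 one_ne_zero]
  rw [integrable_withDensity_iff (measurable_gaussianPDF 0 1)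
    (Filter.Eventually.of_forall fun x => ENNReal.ofReal_lt_top)]
  have : (fun x : ℝ => x ^ 2 * (gaussianPDF 0 1 x).toReal)
      = fun x : ℝ => (Real.sqrt (2 * Real.pi))⁻¹ * (x ^ (2:ℝ) * Real.exp (-(1/2) * x ^ 2)) := by
    funext x
    rw [gaussianPDF, ENNReal.toReal_ofReal (gaussianPDFReal_nonneg 0 1 x), gaussianPDFReal]
    rw [show x ^ (2:ℝ) = x ^ (2:ℕ) from by rw [← Real.rpow_natCast x 2]; norm_num]
    push_cast
    ring_nf
  rw [this]
  exact (integrable_rpow_mul_exp_neg_mul_sq (by norm_num : (0:ℝ) < 1/2)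
    (by norm_num : (-1:ℝ) < 2)).const_mul _

lemma integrable_coord_sq (i : Fin d) :
    Integrable (fun x : Fin d → ℝ => x i ^ 2) (Measure.pi fun _ : Fin d => gaussianReal 0 1) := by
  have : Integrable ((fun s : ℝ => s ^ 2) ∘ (Function.eval i))
      (Measure.pi fun _ : Fin d => gaussianReal 0 1) :=
    Integrable.comp_measurable (by rw [map_eval i]; exact integrable_sq_gauss)
      (measurable_pi_apply i)
  exact this

lemma integrable_sum_sq :
    Integrable (fun x : Fin d → ℝ => ∑ i, x i ^ 2)
      (Measure.pi fun _ : Fin d => gaussianReal 0 1) :=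
  integrable_finset_sum _ fun i _ => integrable_coord_sq i

end MT
noncomputable def qq (t : ℝ) : ℝ := ((gaussianReal 0 1) {s : ℝ | t < s ^ 2}).toReal

noncomputable def VV : ℝ := ∫ s : ℝ, s ^ 2 ∂(gaussianReal 0 1)

lemma VV_nonneg : 0 ≤ VV := integral_nonneg fun s => sq_nonneg s

lemma measSet_sq (t : ℝ) : MeasurableSet {s : ℝ | t < s ^ 2} :=
  measurableSet_lt measurable_const (measurable_id.pow_const 2)

lemma qq_nonneg (t : ℝ) : 0 ≤ qq t := ENNReal.toReal_nonneg

lemma qq_le_one (t : ℝ) : qq t ≤ 1 := by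
  rw [qq, ← ENNReal.toReal_one]
  exact ENNReal.toReal_mono ENNReal.one_ne_top (prob_le_one)

lemma qq_anti {t t' : ℝ} (h : t ≤ t') : qq t' ≤ qq t :=
  ENNReal.toReal_mono (measure_ne_top _ _) (measure_mono fun s hs => lt_of_le_of_lt h hs)

/-- lower bound on the Gaussian CDF near `0` -/
lemma qq_le_sub {t : ℝ} (ht : 0 ≤ t) (ht1 : t ≤ 1) : qq t ≤ 1 - Real.sqrt t / 4 := by
  set a := Real.sqrt t with ha
  have ha0 : 0 ≤ a := Real.sqrt_nonneg t
  have ha1 : a ≤ 1 := by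
    rw [ha, show (1:ℝ) = Real.sqrt 1 from Real.sqrt_one.symm]
    exact Real.sqrt_le_sqrt ht1
  have hcompl : {s : ℝ | t < s ^ 2} = {s : ℝ | s ^ 2 ≤ t}ᶜ := by
    ext s; simp [not_le]
  have hAm : MeasurableSet {s : ℝ | s ^ 2 ≤ t} :=
    measurableSet_le (measurable_id.pow_const 2) measurable_const
  have h1 : qq t = 1 - ((gaussianReal 0 1) {s : ℝ | s ^ 2 ≤ t}).toReal := by
    rw [qq, hcompl, prob_compl_eq_one_sub hAm,
      ENNReal.toReal_sub_of_le prob_le_one ENNReal.one_ne_top, ENNReal.toReal_one]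
  rw [h1]
  have key : a / 4 ≤ ((gaussianReal 0 1) {s : ℝ | s ^ 2 ≤ t}).toReal := by
    have hsub : Set.Icc (-a) a ⊆ {s : ℝ | s ^ 2 ≤ t} := by
      intro s hs
      simp only [Set.mem_Icc] at hs
      have : |s| ≤ a := abs_le.mpr hs
      have h2 : s ^ 2 ≤ a ^ 2 := by
        rw [← sq_abs]; exact pow_le_pow_left₀ (abs_nonneg s) this 2
      simpa [Real.sq_sqrt ht] using h2.trans_eq (by rw [ha, Real.sq_sqrt ht])
    have hmono : (gaussianReal 0 1) (Set.Icc (-a) a) ≤ (gaussianReal 0 1) {s : ℝ | s ^ 2 ≤ t} :=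
      measure_mono hsub
    have hIcc : ((gaussianReal 0 1) (Set.Icc (-a) a)).toReal
        = ∫ x in Set.Icc (-a) a, gaussianPDFReal 0 1 x := by
      rw [gaussianReal_apply_eq_integral 0 one_ne_zero,
        ENNReal.toReal_ofReal (setIntegral_nonneg measurableSet_Icc
          fun x _ => gaussianPDFReal_nonneg 0 1 x)]
    have hptwise : ∀ x ∈ Set.Icc (-a) a, (1/8 : ℝ) ≤ gaussianPDFReal 0 1 x := by
      intro x hx
      simp only [Set.mem_Icc] at hx
      have hx2 : x ^ 2 ≤ 1 := by
        have : |x| ≤ a := abs_le.mpr hx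
        have := pow_le_pow_left₀ (abs_nonneg x) (this.trans ha1) 2
        simpa [sq_abs] using this
      rw [gaussianPDFReal]
      push_cast
      rw [mul_one, mul_one]
      have hsq : Real.sqrt (2 * Real.pi) ≤ 4 := by
        rw [show (4:ℝ) = Real.sqrt 16 from by
          rw [show (16:ℝ) = 4 ^ 2 by norm_num, Real.sqrt_sq (by norm_num)]]
        apply Real.sqrt_le_sqrt
        nlinarith [Real.pi_le_four]
      have hsqpos : (0:ℝ) < Real.sqrt (2 * Real.pi) :=
        Real.sqrt_pos.mpr (by positivity)
      have hinv : (1/4 : ℝ) ≤ (Real.sqrt (2 * Real.pi))⁻¹ := by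
        rw [show (1/4 : ℝ) = 4⁻¹ by norm_num]
        exact inv_anti₀ hsqpos hsq
      have hexp : (1/2 : ℝ) ≤ Real.exp (-(x - 0) ^ 2 / 2) := by
        have := Real.add_one_le_exp (-(x - 0) ^ 2 / 2)
        nlinarith
      calc (1/8 : ℝ) = (1/4) * (1/2) := by norm_num
      _ ≤ _ := mul_le_mul hinv hexp (by norm_num)
          (le_trans (by norm_num) hinv)
    have hlow : a / 4 ≤ ∫ x in Set.Icc (-a) a, gaussianPDFReal 0 1 x := by
      have hconst : ∫ _x in Set.Icc (-a) a, (1/8 : ℝ) = (2 * a) * (1/8) := by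
        rw [setIntegral_const]
        rw [measureReal_def, Real.volume_Icc]
        rw [ENNReal.toReal_ofReal (by linarith : (0:ℝ) ≤ a - -a), smul_eq_mul]
        ring
      have := setIntegral_mono_on
        (integrableOn_const (C := (1/8 : ℝ)) measure_Icc_lt_top.ne)
        ((integrable_gaussianPDFReal 0 1).integrableOn)
        measurableSet_Icc hptwise
      rw [hconst] at this
      linarith
    calc a / 4 ≤ ∫ x in Set.Icc (-a) a, gaussianPDFReal 0 1 x := hlow
    _ = ((gaussianReal 0 1) (Set.Icc (-a) a)).toReal := hIcc.symm
    _ ≤ _ := ENNReal.toReal_mono (measure_ne_top _ _) hmono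
  linarith

lemma qq_markov {t : ℝ} (ht : 0 < t) : qq t ≤ VV / t := by
  have h := mul_meas_ge_le_integral_of_nonneg
    (μ := gaussianReal 0 1) (f := fun s : ℝ => s ^ 2)
    (Filter.Eventually.of_forall fun s => sq_nonneg s) integrable_sq_gauss t
  have hmono : (gaussianReal 0 1) {s : ℝ | t < s ^ 2} ≤ (gaussianReal 0 1) {s : ℝ | t ≤ s ^ 2} :=
    measure_mono fun s hs => show t ≤ s ^ 2 from le_of_lt hs
  have h2 : qq t ≤ ((gaussianReal 0 1) {s : ℝ | t ≤ s ^ 2}).toReal :=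
    ENNReal.toReal_mono (measure_ne_top _ _) hmono
  have h3 : ((gaussianReal 0 1) {s : ℝ | t ≤ s ^ 2}).toReal ≤ VV / t := by
    rw [le_div_iff₀ ht]
    calc ((gaussianReal 0 1) {s : ℝ | t ≤ s ^ 2}).toReal * t
        = t * ((gaussianReal 0 1) {s : ℝ | t ≤ s ^ 2}).toReal := by ring
    _ ≤ VV := h
  exact h2.trans h3
lemma pow_div_le_exp (n : ℕ) (hn : n ≠ 0) {x : ℝ} (hx : 0 ≤ x) :
    (x / n) ^ n ≤ Real.exp x := by
  have hn' : (0:ℝ) < n := by positivity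
  have h1 : (x / n) ^ n ≤ (1 + x / n) ^ n :=
    pow_le_pow_left₀ (by positivity) (by linarith [div_nonneg hx hn'.le]) n
  have h2 : (1 + x / n) ^ n ≤ (Real.exp (x / n)) ^ n :=
    pow_le_pow_left₀ (by positivity) (by linarith [Real.add_one_le_exp (x / n)]) n
  refine (h1.trans h2).trans_eq ?_
  rw [← Real.exp_nat_mul, mul_div_cancel₀ _ hn'.ne']

lemma exp_neg_le_sq {x : ℝ} (hx : 0 < x) : Real.exp (-x) ≤ 4 / x ^ 2 := by
  have h := pow_div_le_exp 2 (by norm_num) hx.le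
  rw [Real.exp_neg]
  rw [div_pow] at h
  have h2 : x ^ 2 / 4 ≤ Real.exp x := by norm_num at h; convert h using 2 <;> norm_num
  calc (Real.exp x)⁻¹ ≤ (x ^ 2 / 4)⁻¹ := inv_anti₀ (by positivity) h2
  _ = 4 / x ^ 2 := by rw [inv_div]

lemma exp_neg_le_four {x : ℝ} (hx : 0 < x) : Real.exp (-x) ≤ 256 / x ^ 4 := by
  have h := pow_div_le_exp 4 (by norm_num) hx.le
  rw [Real.exp_neg]
  rw [div_pow] at h
  have h2 : x ^ 4 / 256 ≤ Real.exp x := by norm_num at h; convert h using 2 <;> norm_num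
  calc (Real.exp x)⁻¹ ≤ (x ^ 4 / 256)⁻¹ := inv_anti₀ (by positivity) h2
  _ = 256 / x ^ 4 := by rw [inv_div]

lemma qq_pow_mid {m : ℕ} {t : ℝ} (ht : 0 < t) (ht1 : t ≤ 1) :
    qq t ^ m ≤ Real.exp (-((m:ℝ) * Real.sqrt t / 4)) := by
  have h1 : qq t ≤ Real.exp (-(Real.sqrt t / 4)) := by
    have := Real.add_one_le_exp (-(Real.sqrt t / 4))
    have := qq_le_sub ht.le ht1
    linarith
  calc qq t ^ m ≤ (Real.exp (-(Real.sqrt t / 4))) ^ m :=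
        pow_le_pow_left₀ (qq_nonneg t) h1 m
  _ = Real.exp (-((m:ℝ) * Real.sqrt t / 4)) := by
      rw [← Real.exp_nat_mul]; ring_nf

lemma exp_half_le_two : Real.exp (1/2 : ℝ) ≤ 2 := by
  have h : (2:ℝ)⁻¹ ≤ Real.exp (-(1/2 : ℝ)) := by
    have := Real.add_one_le_exp (-(1/2) : ℝ); linarith
  calc Real.exp (1/2 : ℝ) = (Real.exp (-(1/2 : ℝ)))⁻¹ := by
        rw [← Real.exp_neg]; norm_num
  _ ≤ ((2:ℝ)⁻¹)⁻¹ := inv_anti₀ (by norm_num) h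
  _ = 2 := by norm_num

lemma three_quarters_le : (3:ℝ)/4 ≤ Real.exp (-(1/4 : ℝ)) := by
  have := Real.add_one_le_exp (-(1/4) : ℝ); linarith

lemma three_quarters_pow {m : ℕ} (hm : 2 ≤ m) :
    ((3:ℝ)/4) ^ (m - 2) ≤ 128 / (m:ℝ) ^ 2 := by
  have hm0 : (0:ℝ) < (m:ℝ) := by
    have : 0 < m := by omega
    exact_mod_cast this
  have h1 : ((3:ℝ)/4) ^ (m - 2) ≤ Real.exp (-(1/4 : ℝ)) ^ (m - 2) :=
    pow_le_pow_left₀ (by norm_num) three_quarters_le _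
  have h2 : Real.exp (-(1/4 : ℝ)) ^ (m - 2) = Real.exp (-(((m:ℝ) - 2) / 4)) := by
    rw [← Real.exp_nat_mul]
    congr 1
    have : ((m - 2 : ℕ) : ℝ) = (m:ℝ) - 2 := by
      have : (2:ℕ) ≤ m := hm
      push_cast [Nat.cast_sub this]
      ring
    rw [this]; ring
  have h3 : Real.exp (-(((m:ℝ) - 2) / 4)) = Real.exp (1/2 : ℝ) * Real.exp (-((m:ℝ)/4)) := by
    rw [← Real.exp_add]; ring_nf
  have h4 : Real.exp (-((m:ℝ)/4)) ≤ 4 / ((m:ℝ)/4) ^ 2 := exp_neg_le_sq (by positivity)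
  have h5 : (4:ℝ) / ((m:ℝ)/4) ^ 2 = 64 / (m:ℝ) ^ 2 := by
    field_simp; ring
  calc ((3:ℝ)/4) ^ (m - 2) ≤ Real.exp (-(((m:ℝ) - 2) / 4)) := h2 ▸ h1
  _ = Real.exp (1/2 : ℝ) * Real.exp (-((m:ℝ)/4)) := h3
  _ ≤ 2 * (64 / (m:ℝ) ^ 2) := by
      apply mul_le_mul exp_half_le_two (h4.trans_eq h5) (Real.exp_pos _).le (by norm_num)
  _ = 128 / (m:ℝ) ^ 2 := by ring

lemma qq_pow_large {m : ℕ} (hm : 2 ≤ m) {t : ℝ} (ht : 1 ≤ t) :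
    qq t ^ m ≤ 128 * VV ^ 2 / ((m:ℝ) ^ 2 * t ^ 2) := by
  have hm0 : (0:ℝ) < (m:ℝ) := by
    have : 0 < m := by omega
    exact_mod_cast this
  have ht0 : (0:ℝ) < t := lt_of_lt_of_le one_pos ht
  have hq34 : qq t ≤ 3/4 := by
    have h1 := qq_anti ht
    have h2 := qq_le_sub (le_of_lt one_pos) (le_refl (1:ℝ))
    rw [Real.sqrt_one] at h2
    linarith
  have hqV : qq t ≤ VV / t := qq_markov ht0
  have hsplit : qq t ^ m = qq t ^ (m - 2) * qq t ^ 2 := by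
    rw [← pow_add]; congr 1; omega
  rw [hsplit]
  have h1 : qq t ^ (m - 2) ≤ ((3:ℝ)/4) ^ (m - 2) :=
    pow_le_pow_left₀ (qq_nonneg t) hq34 _
  have h2 : qq t ^ 2 ≤ (VV / t) ^ 2 :=
    pow_le_pow_left₀ (qq_nonneg t) hqV 2
  calc qq t ^ (m - 2) * qq t ^ 2 ≤ (128 / (m:ℝ) ^ 2) * ((VV / t) ^ 2) := by
        apply mul_le_mul (h1.trans (three_quarters_pow hm)) h2
          (pow_nonneg (qq_nonneg t) 2) (by positivity)
  _ = 128 * VV ^ 2 / ((m:ℝ) ^ 2 * t ^ 2) := by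
      field_simp

noncomputable def CC : ℝ := 512 + 128 * VV ^ 2

lemma CC_pos : 0 < CC := by
  have := sq_nonneg VV
  unfold CC; nlinarith

lemma tail_integral_bound {m : ℕ} (hm : 2 ≤ m) :
    ∫ t in Set.Ioi (0:ℝ), qq t ^ m ≤ CC / (m:ℝ) ^ 2 := by
  have hm0 : (0:ℝ) < (m:ℝ) := by
    have : 0 < m := by omega
    exact_mod_cast this
  set t₀ : ℝ := 256 / (m:ℝ) ^ 2 with ht₀def
  have ht₀ : 0 < t₀ := by positivity
  set c₂ : ℝ := 65536 / (m:ℝ) ^ 4 with hc₂def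
  set c₃ : ℝ := 128 * VV ^ 2 / (m:ℝ) ^ 2 with hc₃def
  have hc₂ : 0 ≤ c₂ := by positivity
  have hc₃ : 0 ≤ c₃ := by positivity
  set g : ℝ → ℝ := fun t =>
      Set.indicator (Set.Ioc 0 t₀) (fun _ => (1:ℝ)) t
    + Set.indicator (Set.Ioi t₀) (fun t => c₂ * t ^ (-2:ℝ)) t
    + Set.indicator (Set.Ioi 1) (fun t => c₃ * t ^ (-2:ℝ)) t with hgdef
  -- integrability of the three pieces on Ioi 0
  have hint1 : Integrable (Set.indicator (Set.Ioc 0 t₀) (fun _ => (1:ℝ)))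
      (volume.restrict (Set.Ioi (0:ℝ))) := by
    rw [integrable_indicator_iff measurableSet_Ioc]
    exact (integrableOn_const (C := (1 : ℝ)) measure_Ioc_lt_top.ne).mono_measure
      Measure.restrict_le_self
  have hrpow : ∀ a : ℝ, 0 < a → IntegrableOn (fun t : ℝ => t ^ (-2:ℝ)) (Set.Ioi a)
      (volume.restrict (Set.Ioi (0:ℝ))) := by
    intro a ha
    exact (integrableOn_Ioi_rpow_of_lt (by norm_num) ha).mono_measure Measure.restrict_le_self
  have hint2 : Integrable (Set.indicator (Set.Ioi t₀) (fun t => c₂ * t ^ (-2:ℝ)))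
      (volume.restrict (Set.Ioi (0:ℝ))) := by
    rw [integrable_indicator_iff measurableSet_Ioi]
    exact ((hrpow t₀ ht₀).const_mul c₂)
  have hint3 : Integrable (Set.indicator (Set.Ioi 1) (fun t => c₃ * t ^ (-2:ℝ)))
      (volume.restrict (Set.Ioi (0:ℝ))) := by
    rw [integrable_indicator_iff measurableSet_Ioi]
    exact ((hrpow 1 one_pos).const_mul c₃)
  have hgint : Integrable g (volume.restrict (Set.Ioi (0:ℝ))) :=
    (hint1.add hint2).add hint3
  -- pointwise bound on Ioi 0
  have hptwise : ∀ t ∈ Set.Ioi (0:ℝ), qq t ^ m ≤ g t := by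
    intro t ht
    simp only [Set.mem_Ioi] at ht
    have hind2nn : 0 ≤ Set.indicator (Set.Ioi t₀) (fun t => c₂ * t ^ (-2:ℝ)) t := by
      apply Set.indicator_nonneg
      intro s hs
      have : (0:ℝ) < s := lt_trans ht₀ hs
      positivity
    have hind3nn : 0 ≤ Set.indicator (Set.Ioi 1) (fun t => c₃ * t ^ (-2:ℝ)) t := by
      apply Set.indicator_nonneg
      intro s hs
      have : (0:ℝ) < s := lt_trans one_pos hs
      positivity
    have hind1nn : 0 ≤ Set.indicator (Set.Ioc 0 t₀) (fun _ => (1:ℝ)) t :=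
      Set.indicator_nonneg (fun _ _ => by norm_num) t
    have hrpow_eq : t ^ (-2:ℝ) = (t ^ 2)⁻¹ := by
      rw [Real.rpow_neg ht.le, show ((2:ℝ) = ((2:ℕ):ℝ)) by norm_num, Real.rpow_natCast]
    by_cases h0 : t ≤ t₀
    · have : Set.indicator (Set.Ioc 0 t₀) (fun _ => (1:ℝ)) t = 1 :=
        Set.indicator_of_mem (Set.mem_Ioc.mpr ⟨ht, h0⟩) _
      have hb : qq t ^ m ≤ 1 := pow_le_one₀ (qq_nonneg t) (qq_le_one t)
      rw [hgdef]
      simp only []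
      linarith [hb, hind2nn, hind3nn, this]
    · push_neg at h0
      by_cases h1 : t ≤ 1
      · -- middle region
        have hmem : Set.indicator (Set.Ioi t₀) (fun t => c₂ * t ^ (-2:ℝ)) t
            = c₂ * t ^ (-2:ℝ) := Set.indicator_of_mem h0 _
        have hx : 0 < (m:ℝ) * Real.sqrt t / 4 := by
          have : 0 < Real.sqrt t := Real.sqrt_pos.mpr ht
          positivity
        have hb : qq t ^ m ≤ 256 / ((m:ℝ) * Real.sqrt t / 4) ^ 4 :=
          (qq_pow_mid ht h1).trans (exp_neg_le_four hx)
        have hsqrt4 : ((m:ℝ) * Real.sqrt t / 4) ^ 4 = (m:ℝ) ^ 4 * t ^ 2 / 256 := by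
          have h2 : Real.sqrt t ^ 4 = t ^ 2 := by
            rw [show (4:ℕ) = 2 * 2 by norm_num, pow_mul, Real.sq_sqrt ht.le]
          rw [div_pow, mul_pow, h2]
          norm_num
        have hb2 : qq t ^ m ≤ c₂ * t ^ (-2:ℝ) := by
          calc qq t ^ m ≤ 256 / ((m:ℝ) ^ 4 * t ^ 2 / 256) := by rw [← hsqrt4]; exact hb
          _ = c₂ * t ^ (-2:ℝ) := by
              rw [hrpow_eq, hc₂def]
              have htne : t ≠ 0 := ht.ne'
              have hmne : (m:ℝ) ≠ 0 := hm0.ne'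
              field_simp
              ring
        rw [hgdef]
        simp only []
        linarith [hb2, hind1nn, hind3nn, hmem]
      · push_neg at h1
        have hmem : Set.indicator (Set.Ioi 1) (fun t => c₃ * t ^ (-2:ℝ)) t
            = c₃ * t ^ (-2:ℝ) := Set.indicator_of_mem h1 _
        have hb : qq t ^ m ≤ 128 * VV ^ 2 / ((m:ℝ) ^ 2 * t ^ 2) :=
          qq_pow_large hm h1.le
        have hb2 : qq t ^ m ≤ c₃ * t ^ (-2:ℝ) := by
          calc qq t ^ m ≤ 128 * VV ^ 2 / ((m:ℝ) ^ 2 * t ^ 2) := hb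
          _ = c₃ * t ^ (-2:ℝ) := by
              rw [hrpow_eq, hc₃def]
              have htne : t ≠ 0 := (lt_trans one_pos h1).ne'
              have hmne : (m:ℝ) ≠ 0 := hm0.ne'
              field_simp
        rw [hgdef]
        simp only []
        linarith [hb2, hind1nn, hind2nn, hmem]
  -- integral of g
  have hI1 : ∫ t in Set.Ioi (0:ℝ), Set.indicator (Set.Ioc 0 t₀) (fun _ => (1:ℝ)) t = t₀ := by
    rw [integral_indicator measurableSet_Ioc]
    rw [Measure.restrict_restrict measurableSet_Ioc]
    rw [show Set.Ioc (0:ℝ) t₀ ∩ Set.Ioi 0 = Set.Ioc 0 t₀ by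
      ext s; simp only [Set.mem_inter_iff, Set.mem_Ioc, Set.mem_Ioi, and_iff_left_iff_imp]
      exact fun h => h.1]
    simp [Real.volume_Ioc, ENNReal.toReal_ofReal ht₀.le, ht₀.le]
  have hIoiInter : ∀ a : ℝ, 0 < a → Set.Ioi a ∩ Set.Ioi (0:ℝ) = Set.Ioi a := by
    intro a ha
    ext s; simp only [Set.mem_inter_iff, Set.mem_Ioi, and_iff_left_iff_imp]
    exact fun h => lt_trans ha h
  have hIrpow : ∀ a : ℝ, 0 < a → ∫ t in Set.Ioi a, (t : ℝ) ^ (-2:ℝ) = a⁻¹ := by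
    intro a ha
    rw [integral_Ioi_rpow_of_lt (by norm_num) ha]
    norm_num
    rw [Real.rpow_neg_one]
  have hI2 : ∫ t in Set.Ioi (0:ℝ), Set.indicator (Set.Ioi t₀) (fun t => c₂ * t ^ (-2:ℝ)) t
      = c₂ * t₀⁻¹ := by
    rw [integral_indicator measurableSet_Ioi,
      Measure.restrict_restrict measurableSet_Ioi, hIoiInter t₀ ht₀,
      integral_const_mul, hIrpow t₀ ht₀]
  have hI3 : ∫ t in Set.Ioi (0:ℝ), Set.indicator (Set.Ioi 1) (fun t => c₃ * t ^ (-2:ℝ)) t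
      = c₃ := by
    rw [integral_indicator measurableSet_Ioi,
      Measure.restrict_restrict measurableSet_Ioi, hIoiInter 1 one_pos,
      integral_const_mul, hIrpow 1 one_pos]
    norm_num
  have hint12 : Integrable (fun t : ℝ =>
      Set.indicator (Set.Ioc 0 t₀) (fun _ => (1:ℝ)) t
        + Set.indicator (Set.Ioi t₀) (fun t => c₂ * t ^ (-2:ℝ)) t)
      (volume.restrict (Set.Ioi (0:ℝ))) := hint1.add hint2
  have hgI : ∫ t in Set.Ioi (0:ℝ), g t = t₀ + c₂ * t₀⁻¹ + c₃ := by
    rw [hgdef]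
    rw [integral_add hint12 hint3, integral_add hint1 hint2, hI1, hI2, hI3]
  have hmain : ∫ t in Set.Ioi (0:ℝ), qq t ^ m ≤ ∫ t in Set.Ioi (0:ℝ), g t := by
    refine integral_mono_of_nonneg ?_ hgint ?_
    · exact ae_of_all _ fun t => pow_nonneg (qq_nonneg t) m
    · rw [Filter.EventuallyLE, ae_restrict_iff' measurableSet_Ioi]
      exact ae_of_all _ hptwise
  rw [hgI] at hmain
  refine hmain.trans ?_
  have : t₀ + c₂ * t₀⁻¹ + c₃ = CC / (m:ℝ) ^ 2 := by
    rw [ht₀def, hc₂def, hc₃def]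
    unfold CC
    have hmne : (m:ℝ) ≠ 0 := hm0.ne'
    field_simp
    ring
  linarith [this.le]


section MinBound
variable {d : ℕ}

lemma min_measurable {G : Finset (Fin d)} (hG : G.Nonempty) :
    Measurable (fun x : Fin d → ℝ => G.inf' hG (fun i => x i ^ 2)) := by
  exact meas_inf' (α := Fin d → ℝ) G hG (fun i x => x i ^ 2)
    (fun i => (measurable_pi_apply i).pow_const 2)

lemma min_nonneg {G : Finset (Fin d)} (hG : G.Nonempty) (x : Fin d → ℝ) :
    0 ≤ G.inf' hG (fun i => x i ^ 2) :=
  Finset.le_inf' hG _ fun i _ => sq_nonneg _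

lemma min_le_sum {G : Finset (Fin d)} (hG : G.Nonempty) (x : Fin d → ℝ) :
    G.inf' hG (fun i => x i ^ 2) ≤ ∑ i, x i ^ 2 := by
  obtain ⟨i₀, hi₀⟩ := hG
  exact (Finset.inf'_le _ hi₀).trans
    (Finset.single_le_sum (fun i _ => sq_nonneg (x i)) (Finset.mem_univ i₀))

lemma min_integrable {G : Finset (Fin d)} (hG : G.Nonempty) :
    Integrable (fun x : Fin d → ℝ => G.inf' hG (fun i => x i ^ 2))
      (Measure.pi fun _ : Fin d => gaussianReal 0 1) := by
  refine Integrable.mono' integrable_sum_sq (min_measurable hG).aestronglyMeasurable ?_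
  refine ae_of_all _ fun x => ?_
  rw [Real.norm_eq_abs, abs_of_nonneg (min_nonneg hG x)]
  exact min_le_sum hG x

lemma min_tail_eq {G : Finset (Fin d)} (hG : G.Nonempty) (t : ℝ) :
    ((Measure.pi fun _ : Fin d => gaussianReal 0 1)
        {x : Fin d → ℝ | t < G.inf' hG (fun i => x i ^ 2)}).toReal = qq t ^ G.card := by
  have hset : {x : Fin d → ℝ | t < G.inf' hG (fun i => x i ^ 2)}
      = Set.pi Set.univ (fun i => if i ∈ G then {s : ℝ | t < s ^ 2} else Set.univ) := by
    ext x
    simp only [Set.mem_setOf_eq, Finset.lt_inf'_iff, Set.mem_pi, Set.mem_univ, true_implies]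
    constructor
    · intro h i
      by_cases hi : i ∈ G
      · simpa [hi] using h i hi
      · simp [hi]
    · intro h i hi
      have := h i
      simpa [hi] using this
  rw [hset, Measure.pi_pi]
  simp only [apply_ite (gaussianReal 0 1), measure_univ]
  rw [Finset.prod_ite_mem, Finset.univ_inter, Finset.prod_const, ENNReal.toReal_pow]
  rfl

lemma min_integral_bound {G : Finset (Fin d)} (hG : G.Nonempty) (hcard : 2 ≤ G.card) :
    ∫ x, G.inf' hG (fun i => x i ^ 2) ∂(Measure.pi fun _ : Fin d => gaussianReal 0 1)
      ≤ CC / (G.card : ℝ) ^ 2 := by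
  rw [Integrable.integral_eq_integral_meas_lt (min_integrable hG)
    (ae_of_all _ fun x => min_nonneg hG x)]
  rw [setIntegral_congr_fun measurableSet_Ioi (fun t _ => (measureReal_def _ _).trans (min_tail_eq hG t))]
  exact tail_integral_bound hcard

end MinBound


section Main
variable {d k : ℕ}

lemma kth_measurable (hk : 1 ≤ k) (hkd : k ≤ d) :
    Measurable (kthSmallestSq d k) := by
  have heq : kthSmallestSq d k = fun x =>
      (Finset.powersetCard k (univ : Finset (Fin d))).inf' (pcne hkd) (gmax x) :=
    funext fun x => kth_eq hk hkd x
  rw [heq]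
  refine meas_inf' (α := Fin d → ℝ) _ (pcne hkd) (fun S x => gmax x S) fun S => ?_
  show Measurable (fun x : Fin d → ℝ => gmax x S)
  by_cases hS : S.Nonempty
  · have : (fun x : Fin d → ℝ => gmax x S)
        = fun x => S.sup' hS (fun i => x i ^ 2) := funext fun x => dif_pos hS
    rw [this]
    exact meas_sup' (α := Fin d → ℝ) S hS (fun i x => x i ^ 2)
      (fun i => (measurable_pi_apply i).pow_const 2)
  · have : (fun x : Fin d → ℝ => gmax x S) = fun _ => (0:ℝ) := funext fun x => dif_neg hS
    rw [this]
    exact measurable_const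

lemma kth_integrable (hk : 1 ≤ k) (hkd : k ≤ d) :
    Integrable (kthSmallestSq d k) (Measure.pi fun _ : Fin d => gaussianReal 0 1) := by
  refine Integrable.mono' integrable_sum_sq (kth_measurable hk hkd).aestronglyMeasurable ?_
  refine ae_of_all _ fun x => ?_
  rw [Real.norm_eq_abs, abs_of_nonneg (kth_nonneg hk hkd x)]
  exact kth_le_total hk hkd x

lemma sumK_measurable (hkd : k ≤ d) : Measurable (sumKSmallestSq d k) := by
  have heq : sumKSmallestSq d k = fun x =>
      (Finset.powersetCard k (univ : Finset (Fin d))).inf' (pcne hkd)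
        (fun S => ∑ i ∈ S, x i ^ 2) :=
    funext fun x => sumK_eq hkd x
  rw [heq]
  refine meas_inf' (α := Fin d → ℝ) _ (pcne hkd) (fun S x => ∑ i ∈ S, x i ^ 2) fun S => ?_
  exact Finset.measurable_sum S fun i _ => (measurable_pi_apply i).pow_const 2

lemma sumK_integrable (hkd : k ≤ d) :
    Integrable (sumKSmallestSq d k) (Measure.pi fun _ : Fin d => gaussianReal 0 1) := by
  refine Integrable.mono' integrable_sum_sq (sumK_measurable hkd).aestronglyMeasurable ?_
  refine ae_of_all _ fun x => ?_
  rw [Real.norm_eq_abs, abs_of_nonneg (sumK_nonneg hkd x)]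
  exact sumK_le_total hkd x

theorem part1 (hk : 1 ≤ k) (hkd : k ≤ d) :
    ∫ x, sumKSmallestSq d k x ∂(Measure.pi fun _ : Fin d => gaussianReal 0 1)
      ≤ k * ∫ x, kthSmallestSq d k x ∂(Measure.pi fun _ : Fin d => gaussianReal 0 1) := by
  have h := integral_mono (sumK_integrable hkd) ((kth_integrable hk hkd).const_mul (k:ℝ))
    (fun x => sumK_le_k_mul_kth hk hkd x)
  rwa [integral_const_mul] at h

theorem part2 (hk : 1 ≤ k) (hkd2 : 2 * k ≤ d) :
    ∫ x, sumKSmallestSq d k x ∂(Measure.pi fun _ : Fin d => gaussianReal 0 1)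
      ≤ 4 * k * ((k:ℝ) / d) ^ 2 * CC := by
  have hk0 : 0 < k := hk
  have hd0 : 0 < d := by omega
  set m := d / k with hmdef
  have hm2 : 2 ≤ m := (Nat.le_div_iff_mul_le hk0).mpr (by omega)
  have hkm : k * m ≤ d := by rw [hmdef, mul_comm]; exact Nat.div_mul_le_self d k
  have hd2km : d ≤ 2 * k * m := by
    have h1 : d % k < k := Nat.mod_lt d hk0
    have h2 : k * m + d % k = d := by rw [hmdef]; exact Nat.div_add_mod d k
    have h3 : k ≤ k * m := Nat.le_mul_of_pos_right k (by omega)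
    have h4 : 2 * k * m = 2 * (k * m) := by ring
    omega
  -- groups
  set G : ℕ → Finset (Fin d) := fun j =>
    (univ : Finset (Fin d)).filter (fun i => j * m ≤ (i : ℕ) ∧ (i : ℕ) < (j + 1) * m)
    with hGdef
  have hGcard : ∀ j < k, (G j).card = m := by
    intro j hj
    have hb : (j + 1) * m ≤ d := le_trans (Nat.mul_le_mul_right m hj) hkm
    have : G j = (Finset.Ico (j * m) ((j + 1) * m)).attachFin
        (fun a ha => lt_of_lt_of_le (Finset.mem_Ico.mp ha).2 hb) := by
      ext i
      simp [hGdef, Finset.mem_attachFin, Finset.mem_Ico]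
    rw [this, Finset.card_attachFin, Nat.card_Ico]
    have : (j + 1) * m = j * m + m := by ring
    omega
  have hGne : ∀ j < k, (G j).Nonempty := by
    intro j hj
    rw [← Finset.card_pos, hGcard j hj]; omega
  have hGdisj : ∀ j j', j < k → j' < k → j ≠ j' → ∀ i, i ∈ G j → i ∈ G j' → False := by
    intro j j' hj hj' hne i hi hi'
    simp only [hGdef, Finset.mem_filter, Finset.mem_univ, true_and] at hi hi'
    rcases lt_or_gt_of_ne hne with h | h
    · have : (j + 1) * m ≤ j' * m := Nat.mul_le_mul_right m h
      omega
    · have : (j' + 1) * m ≤ j * m := Nat.mul_le_mul_right m h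
      omega
  -- group-min functions with junk value
  set F : ℕ → (Fin d → ℝ) → ℝ := fun j x =>
    if h : (G j).Nonempty then (G j).inf' h (fun i => x i ^ 2) else 0 with hFdef
  have hFeq : ∀ j (hj : j < k), F j = fun x => (G j).inf' (hGne j hj) (fun i => x i ^ 2) :=
    fun j hj => funext fun x => dif_pos (hGne j hj)
  -- pointwise bound
  have hpt : ∀ x : Fin d → ℝ,
      sumKSmallestSq d k x ≤ ∑ j ∈ Finset.range k, F j x := by
    intro x
    have hex : ∀ j ∈ Finset.range k, ∃ i, i ∈ G j ∧ F j x = x i ^ 2 := by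
      intro j hj
      have hjk : j < k := Finset.mem_range.mp hj
      obtain ⟨i, hi, hieq⟩ := Finset.exists_mem_eq_inf' (hGne j hjk) (fun i => x i ^ 2)
      exact ⟨i, hi, by rw [hFeq j hjk]; exact hieq⟩
    choose c hc1 hc2 using hex
    set S : Finset (Fin d) :=
      (Finset.range k).attach.image (fun j => c j.1 j.2) with hSdef
    have hinj : Set.InjOn (fun j : {x // x ∈ Finset.range k} => c j.1 j.2)
        ((Finset.range k).attach : Finset _) := by
      intro a _ b _ hab
      by_contra hne
      have hane : a.1 ≠ b.1 := fun h => hne (Subtype.ext h)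
      have hab' : c a.1 a.2 = c b.1 b.2 := hab
      exact hGdisj a.1 b.1 (Finset.mem_range.mp a.2) (Finset.mem_range.mp b.2) hane
        (c a.1 a.2) (hc1 a.1 a.2) (by rw [hab']; exact hc1 b.1 b.2)
    have hScard : S.card = k := by
      rw [hSdef, Finset.card_image_of_injOn hinj, Finset.card_attach, Finset.card_range]
    have h1 : sumKSmallestSq d k x ≤ ∑ i ∈ S, x i ^ 2 := sumK_le_subset (by omega) x hScard
    have h2 : ∑ i ∈ S, x i ^ 2 = ∑ j ∈ (Finset.range k).attach, x (c j.1 j.2) ^ 2 := by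
      rw [hSdef, Finset.sum_image hinj]
    have h3 : ∑ j ∈ (Finset.range k).attach, x (c j.1 j.2) ^ 2
        = ∑ j ∈ (Finset.range k).attach, F j.1 x := by
      refine Finset.sum_congr rfl fun j _ => ?_
      rw [hc2 j.1 j.2]
    have h4 : ∑ j ∈ (Finset.range k).attach, F j.1 x = ∑ j ∈ Finset.range k, F j x :=
      Finset.sum_attach (Finset.range k) (fun j => F j x)
    exact h1.trans_eq (h2.trans (h3.trans h4))
  -- integrability of F j
  have hFint : ∀ j ∈ Finset.range k, Integrable (F j)
      (Measure.pi fun _ : Fin d => gaussianReal 0 1) := by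
    intro j hj
    rw [hFeq j (Finset.mem_range.mp hj)]
    exact min_integrable (hGne j (Finset.mem_range.mp hj))
  -- integral bound
  have hIF : ∀ j ∈ Finset.range k,
      ∫ x, F j x ∂(Measure.pi fun _ : Fin d => gaussianReal 0 1) ≤ CC / (m:ℝ) ^ 2 := by
    intro j hj
    have hjk : j < k := Finset.mem_range.mp hj
    rw [hFeq j hjk]
    have := min_integral_bound (hGne j hjk) (by rw [hGcard j hjk]; exact hm2)
    rwa [hGcard j hjk] at this
  have hmain : ∫ x, sumKSmallestSq d k x ∂(Measure.pi fun _ : Fin d => gaussianReal 0 1)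
      ≤ (k:ℝ) * (CC / (m:ℝ) ^ 2) := by
    calc ∫ x, sumKSmallestSq d k x ∂(Measure.pi fun _ : Fin d => gaussianReal 0 1)
        ≤ ∫ x, (∑ j ∈ Finset.range k, F j x)
            ∂(Measure.pi fun _ : Fin d => gaussianReal 0 1) :=
          integral_mono (sumK_integrable (by omega))
            (integrable_finset_sum _ hFint) hpt
    _ = ∑ j ∈ Finset.range k, ∫ x, F j x ∂(Measure.pi fun _ : Fin d => gaussianReal 0 1) :=
          integral_finset_sum _ hFint
    _ ≤ ∑ _j ∈ Finset.range k, CC / (m:ℝ) ^ 2 := Finset.sum_le_sum hIF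
    _ = (k:ℝ) * (CC / (m:ℝ) ^ 2) := by
          rw [Finset.sum_const, Finset.card_range, nsmul_eq_mul]
  refine hmain.trans ?_
  -- arithmetic
  have hmR : (0:ℝ) < (m:ℝ) := by
    have : 0 < m := by omega
    exact_mod_cast this
  have hdR : (0:ℝ) < (d:ℝ) := by exact_mod_cast hd0
  have hkR : (0:ℝ) < (k:ℝ) := by exact_mod_cast hk0
  have hcast : (d:ℝ) ≤ 2 * (k:ℝ) * (m:ℝ) := by exact_mod_cast hd2km
  have h1 : (1:ℝ) / (m:ℝ) ^ 2 ≤ 4 * (k:ℝ) ^ 2 / (d:ℝ) ^ 2 := by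
    rw [div_le_div_iff₀ (by positivity) (by positivity)]
    nlinarith [hcast, hmR, hdR]
  calc (k:ℝ) * (CC / (m:ℝ) ^ 2) = (k:ℝ) * CC * ((1:ℝ) / (m:ℝ) ^ 2) := by ring
  _ ≤ (k:ℝ) * CC * (4 * (k:ℝ) ^ 2 / (d:ℝ) ^ 2) := by
      exact mul_le_mul_of_nonneg_left h1 (mul_nonneg hkR.le CC_pos.le)
  _ = 4 * (k:ℝ) * ((k:ℝ) / (d:ℝ)) ^ 2 * CC := by
      field_simp

end Main

end Stmt19Aux

/-- For i.i.d. standard Gaussian coordinates, `E[M_k] ≤ k · E[s_(k)²]`, and for `k ≤ d/2` the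
expectation `E[M_k]` is at most `4 k (k/d)² c` for a universal constant `c`; hence the expected
squared distortion `4 E[M_k]` of flipping the `k` smallest-magnitude coordinates is
`O(k³/d²)`. -/
theorem stmt_19 :
    (∀ d k : ℕ, 1 ≤ k → k ≤ d →
      ∫ x, sumKSmallestSq d k x ∂(Measure.pi fun _ : Fin d => gaussianReal 0 1)
        ≤ k * ∫ x, kthSmallestSq d k x ∂(Measure.pi fun _ : Fin d => gaussianReal 0 1)) ∧
    ∃ c : ℝ, 0 < c ∧ ∀ d k : ℕ, 1 ≤ k → 2 * k ≤ d →
      (∫ x, sumKSmallestSq d k x ∂(Measure.pi fun _ : Fin d => gaussianReal 0 1)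
          ≤ 4 * k * ((k : ℝ) / d) ^ 2 * c) ∧
      4 * ∫ x, sumKSmallestSq d k x ∂(Measure.pi fun _ : Fin d => gaussianReal 0 1)
          ≤ 16 * c * (k : ℝ) ^ 3 / (d : ℝ) ^ 2 := by
  constructor
  · exact fun d k hk hkd => Stmt19Aux.part1 hk hkd
  · refine ⟨Stmt19Aux.CC, Stmt19Aux.CC_pos, fun d k hk hkd2 => ?_⟩
    have h := Stmt19Aux.part2 hk hkd2
    refine ⟨h, ?_⟩
    have hd0 : (0:ℝ) < (d:ℝ) := by
      have : 0 < d := by omega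
      exact_mod_cast this
    have heq : 4 * (4 * (k:ℝ) * ((k:ℝ) / d) ^ 2 * Stmt19Aux.CC)
        = 16 * Stmt19Aux.CC * (k:ℝ) ^ 3 / (d:ℝ) ^ 2 := by
      field_simp
      ring
    linarith [h]
end
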